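/- Let s ≥ 1, let ϑ ≥ 0, and set ω0 = 1 + ϑ/s², ω1 = T_s(ω0)/T_s′(ω0), b_j = 1/T_j(ω0) for 0 ≤ j ≤ s (first-order RKC1 coefficients, so a_j = 0 and γ_j = 0), with μ_j, ν_j, κ_j the RKC coefficients. Let f : ℝⁿ → ℝⁿ, ŷ ∈ ℝⁿ, Δt > 0, K ≥ 0, and let Δ̂f_1, …, Δ̂f_{s−1} ∈ ℝⁿ satisfy ‖Δ̂f_j‖₂ ≤ K for all j. Define d̂_0 = 0, d̂_1 = μ_1 Δt f(ŷ), d̂_j = ν_j d̂_{j−1} + κ_j d̂_{j−2} + μ_j Δt (f(ŷ) + Δ̂f_{j−1}) for 2 ≤ j ≤ s, and ŷ⁺ = ŷ + d̂_s. Then ‖ŷ⁺ − ŷ − Δt f(ŷ)‖₂ ≤ K Δt. -/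

import Mathlib

noncomputable section

/-- Chebyshev polynomial of the first kind, evaluated in an arbitrary ring. -/
def chebT (R : Type*) [Ring R] : ℕ → R → R
  | 0, _ => 1
  | 1, x => x
  | n + 2, x => 2 * x * chebT R (n + 1) x - chebT R n x

/-- Chebyshev polynomial of the second kind, evaluated in an arbitrary ring. -/
def chebU (R : Type*) [Ring R] : ℕ → R → R
  | 0, _ => 1
  | 1, x => 2 * x
  | n + 2, x => 2 * x * chebU R (n + 1) x - chebU R n x

/-- Spectral norm of a real matrix: operator norm induced by the Euclidean norms. -/
def specNorm {m n : ℕ} (A : Matrix (Fin m) (Fin n) ℝ) : ℝ :=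
  ‖(Matrix.toEuclideanLin A).toContinuousLinearMap‖


lemma two_step {P : ℕ → Prop} (h0 : P 0) (h1 : P 1)
    (ih : ∀ m, P m → P (m+1) → P (m+2)) : ∀ m, P m := by
  have h : ∀ m, P m ∧ P (m+1) := by
    intro m
    induction m with
    | zero => exact ⟨h0, h1⟩
    | succ k hk => exact ⟨hk.2, ih k hk.1 hk.2⟩
  exact fun m => (h m).1

lemma chebT_rec (m : ℕ) (x : ℝ) :
    chebT ℝ (m+2) x = 2*x*chebT ℝ (m+1) x - chebT ℝ m x := rfl

lemma chebU_rec (m : ℕ) (x : ℝ) :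
    chebU ℝ (m+2) x = 2*x*chebU ℝ (m+1) x - chebU ℝ m x := rfl

lemma chebT_mono {x : ℝ} (hx : 1 ≤ x) :
    ∀ m, 1 ≤ chebT ℝ m x ∧ chebT ℝ m x ≤ chebT ℝ (m+1) x := by
  intro m
  induction m with
  | zero => exact ⟨le_refl _, by simpa [chebT] using hx⟩
  | succ k hk =>
    obtain ⟨h1, h2⟩ := hk
    refine ⟨h1.trans h2, ?_⟩
    rw [chebT_rec]
    nlinarith

lemma one_le_chebT {x : ℝ} (hx : 1 ≤ x) (m : ℕ) : 1 ≤ chebT ℝ m x :=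
  (chebT_mono hx m).1

lemma chebU_mono {x : ℝ} (hx : 1 ≤ x) :
    ∀ m, 1 ≤ chebU ℝ m x ∧ chebU ℝ m x ≤ chebU ℝ (m+1) x := by
  intro m
  induction m with
  | zero => refine ⟨le_refl _, by simp [chebU]; nlinarith⟩
  | succ k hk =>
    obtain ⟨h1, h2⟩ := hk
    refine ⟨h1.trans h2, ?_⟩
    rw [chebU_rec]
    nlinarith

lemma one_le_chebU {x : ℝ} (hx : 1 ≤ x) (m : ℕ) : 1 ≤ chebU ℝ m x :=
  (chebU_mono hx m).1

lemma chebU_succ (x : ℝ) : ∀ m, chebU ℝ (m+1) x = x * chebU ℝ m x + chebT ℝ (m+1) x := by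
  refine two_step ?_ ?_ ?_
  · simp [chebU, chebT]; ring
  · simp [chebU, chebT]; ring
  · intro m h1 h2
    have h2' : chebU ℝ (m+2) x = x * chebU ℝ (m+1) x + chebT ℝ (m+2) x := h2
    have e1 := chebU_rec m x
    show chebU ℝ (m+3) x = _
    have e2 : chebU ℝ (m+3) x = 2*x*chebU ℝ (m+2) x - chebU ℝ (m+1) x := chebU_rec (m+1) x
    have e3 : chebT ℝ (m+3) x = 2*x*chebT ℝ (m+2) x - chebT ℝ (m+1) x := chebT_rec (m+1) x
    rw [e2, e3, e1]
    linear_combination 2*x*h2' - h1 - 2*x*e1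

lemma chebTU_add (x : ℝ) (b : ℕ) :
    ∀ a, chebT ℝ (a+1) x * chebU ℝ b x + chebT ℝ (b+1) x * chebU ℝ a x
      = chebU ℝ (a+b+1) x := by
  refine two_step ?_ ?_ ?_
  · have e : (0:ℕ)+b+1 = b+1 := by omega
    have h := chebU_succ x b
    show chebT ℝ 1 x * chebU ℝ b x + chebT ℝ (b+1) x * chebU ℝ 0 x = chebU ℝ (0+b+1) x
    rw [e, h]
    simp [chebT, chebU]
  · -- a = 1
    have h1 := chebU_succ x b
    have h2 : chebU ℝ (b+2) x = 2*x*chebU ℝ (b+1) x - chebU ℝ b x := chebU_rec b x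
    have e1 : chebT ℝ 2 x = 2*x*x - 1 := by simp [chebT]
    show chebT ℝ 2 x * chebU ℝ b x + chebT ℝ (b+1) x * chebU ℝ 1 x = chebU ℝ (1+b+1) x
    have e2 : chebU ℝ 1 x = 2*x := rfl
    have e3 : (1+b+1) = b+2 := by omega
    rw [e1, e2, e3, h2]
    linear_combination -2*x*h1
  · intro a ha1 ha2
    have eT : chebT ℝ (a+3) x = 2*x*chebT ℝ (a+2) x - chebT ℝ (a+1) x := chebT_rec (a+1) x
    have eU : chebU ℝ (a+2) x = 2*x*chebU ℝ (a+1) x - chebU ℝ a x := chebU_rec a x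
    have eW : chebU ℝ (a+b+3) x = 2*x*chebU ℝ (a+b+2) x - chebU ℝ (a+b+1) x := chebU_rec (a+b+1) x
    have ha2' : chebT ℝ (a+2) x * chebU ℝ b x + chebT ℝ (b+1) x * chebU ℝ (a+1) x
        = chebU ℝ (a+b+2) x := by
      have e : a+1+b+1 = a+b+2 := by omega
      rw [← e]; exact ha2
    show chebT ℝ (a+3) x * chebU ℝ b x + chebT ℝ (b+1) x * chebU ℝ (a+2) x
        = chebU ℝ (a+2+b+1) x
    have e : a+2+b+1 = a+b+3 := by omega
    rw [e, eT, eU, eW]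
    linear_combination 2*x*ha2' - ha1

lemma key_a (x : ℝ) (k : ℕ) :
    ((k:ℝ)+2) * chebU ℝ (k+1) x
      = 2*x*((k:ℝ)+1)*chebU ℝ k x + 2*chebT ℝ (k+1) x - (k:ℝ)*chebU ℝ (k-1) x := by
  cases k with
  | zero => simp [chebU, chebT]; ring
  | succ m =>
    have h1 := chebU_succ x (m+1)
    have h2 : chebU ℝ (m+2) x = 2*x*chebU ℝ (m+1) x - chebU ℝ m x := chebU_rec m x
    have e : (m+1:ℕ) - 1 = m := by omega
    rw [e]
    push_cast
    linear_combination ((m:ℝ)+1)*h2 + 2*h1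

lemma hasDerivAt_chebT (x : ℝ) :
    ∀ m, HasDerivAt (fun y => chebT ℝ m y) ((m:ℝ) * chebU ℝ (m-1) x) x := by
  refine two_step ?_ ?_ ?_
  · simpa [chebT] using (hasDerivAt_const x (1:ℝ))
  · simpa [chebT, chebU] using (hasDerivAt_id' x)
  · intro m h1 h2
    have hT : HasDerivAt (fun y => chebT ℝ (m+2) y)
        (2*x*(((m:ℝ)+1) * chebU ℝ m x) + 2 * chebT ℝ (m+1) x - (m:ℝ) * chebU ℝ (m-1) x) x := by
      have hprod : HasDerivAt (fun y => 2*y*chebT ℝ (m+1) y)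
          (2*x*(((m:ℝ)+1) * chebU ℝ m x) + 2 * chebT ℝ (m+1) x) x := by
        have hid : HasDerivAt (fun y : ℝ => 2*y) 2 x := by
          simpa using (hasDerivAt_id x).const_mul (2:ℝ)
        have h2' : HasDerivAt (fun y => chebT ℝ (m+1) y) (((m:ℝ)+1) * chebU ℝ m x) x := by
          simpa using h2
        have : HasDerivAt (fun y => 2*y*chebT ℝ (m+1) y)
            (2 * chebT ℝ (m+1) x + 2*x*(((m:ℝ)+1) * chebU ℝ m x)) x := hid.mul h2'
        convert this using 1
        ring
      have := hprod.sub h1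
      have heq : (fun y => chebT ℝ (m+2) y) = fun y => 2*y*chebT ℝ (m+1) y - chebT ℝ m y := by
        funext y; exact chebT_rec m y
      rw [heq]
      exact this
    have : (((m:ℕ)+2 : ℕ):ℝ) * chebU ℝ ((m+2)-1) x
        = 2*x*(((m:ℝ)+1) * chebU ℝ m x) + 2 * chebT ℝ (m+1) x - (m:ℝ) * chebU ℝ (m-1) x := by
      have e : (m+2:ℕ) - 1 = m+1 := by omega
      rw [e]
      push_cast
      linear_combination key_a x m
    rw [this]
    exact hT

/-- coefficient of the perturbation `Δf (i+1)` in stage `j` (up to a common factor). -/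
def ccoef (x : ℝ) (j i : ℕ) : ℝ :=
  if i + 2 ≤ j then 2 * chebT ℝ (i+1) x * chebU ℝ (j-2-i) x else 0

lemma ccoef_nonneg {x : ℝ} (hx : 1 ≤ x) (j i : ℕ) : 0 ≤ ccoef x j i := by
  unfold ccoef
  split
  · have h1 := one_le_chebT hx (i+1)
    have h2 := one_le_chebU hx (j-2-i)
    positivity
  · exact le_refl 0

lemma ccoef_rec (x : ℝ) (k i : ℕ) :
    ccoef x (k+2) i = 2*x*ccoef x (k+1) i - ccoef x k i
      + (if i = k then 2*chebT ℝ (k+1) x else 0) := by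
  rcases eq_or_ne i k with rfl | hik
  · have e1 : ccoef x (i+2) i = 2*chebT ℝ (i+1) x := by
      unfold ccoef
      rw [if_pos (by omega)]
      have : i+2-2-i = 0 := by omega
      rw [this]
      simp [chebU]
    rw [e1]
    unfold ccoef
    rw [if_neg (by omega), if_neg (by omega), if_pos rfl]
    ring
  · rw [if_neg hik]
    rcases le_or_gt (i+2) k with h | h
    · -- generic case: i + 2 ≤ k
      obtain ⟨m, hm⟩ : ∃ m, k = i+2+m := ⟨k-(i+2), by omega⟩
      subst hm
      unfold ccoef
      rw [if_pos (by omega), if_pos (by omega), if_pos (by omega)]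
      have e1 : i+2+m+2-2-i = m+2 := by omega
      have e2 : i+2+m+1-2-i = m+1 := by omega
      have e3 : i+2+m-2-i = m := by omega
      rw [e1, e2, e3, chebU_rec]
      ring
    · rcases eq_or_ne (i+1) k with rfl | h2
      · -- i = k - 1
        unfold ccoef
        rw [if_pos (by omega), if_pos (by omega), if_neg (by omega)]
        have e1 : i+1+2-2-i = 1 := by omega
        have e2 : i+1+1-2-i = 0 := by omega
        rw [e1, e2]
        simp [chebU]
        ring
      · -- i ≥ k + 1
        have hik' : k + 1 ≤ i := by omega
        unfold ccoef
        rw [if_neg (by omega), if_neg (by omega), if_neg (by omega)]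
        ring

lemma sum_ccoef {x : ℝ} (s : ℕ) (hs : 1 ≤ s) :
    ∑ i ∈ Finset.range s, ccoef x s i = ((s:ℝ)-1) * chebU ℝ (s-1) x := by
  obtain ⟨t, rfl⟩ : ∃ t, s = t+1 := ⟨s-1, by omega⟩
  rw [Finset.sum_range_succ]
  have hlast : ccoef x (t+1) t = 0 := by
    unfold ccoef; rw [if_neg (by omega)]
  rw [hlast, add_zero]
  have hval : ∀ i ∈ Finset.range t, ccoef x (t+1) i
      = 2 * chebT ℝ (i+1) x * chebU ℝ (t-1-i) x := by
    intro i hi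
    simp only [Finset.mem_range] at hi
    unfold ccoef
    rw [if_pos (by omega)]
    have e : t+1-2-i = t-1-i := by omega
    rw [e]
  rw [Finset.sum_congr rfl hval]
  -- now prove ∑ i ∈ range t, 2 T_{i+1} U_{t-1-i} = t * U_t
  have refl1 : ∑ i ∈ Finset.range t, chebT ℝ (i+1) x * chebU ℝ (t-1-i) x
      = ∑ i ∈ Finset.range t, chebT ℝ (t-i) x * chebU ℝ i x := by
    rw [← Finset.sum_range_reflect (fun i => chebT ℝ (t-i) x * chebU ℝ i x) t]
    apply Finset.sum_congr rfl
    intro i hi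
    simp only [Finset.mem_range] at hi
    congr 2 <;> omega
  have pair : ∀ i ∈ Finset.range t,
      chebT ℝ (i+1) x * chebU ℝ (t-1-i) x + chebT ℝ (t-i) x * chebU ℝ i x
        = chebU ℝ t x := by
    intro i hi
    simp only [Finset.mem_range] at hi
    have := chebTU_add x (t-1-i) i
    have e1 : (t-1-i)+1 = t-i := by omega
    have e2 : i+(t-1-i)+1 = t := by omega
    rw [e1, e2] at this
    exact this
  have key : 2 * ∑ i ∈ Finset.range t, chebT ℝ (i+1) x * chebU ℝ (t-1-i) x
      = (t:ℝ) * chebU ℝ t x := by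
    rw [two_mul]
    nth_rewrite 2 [refl1]
    rw [← Finset.sum_add_distrib, Finset.sum_congr rfl pair, Finset.sum_const,
      Finset.card_range, nsmul_eq_mul]
  have e3 : (t+1:ℕ)-1 = t := by omega
  rw [e3]
  push_cast
  calc ∑ i ∈ Finset.range t, 2 * chebT ℝ (i+1) x * chebU ℝ (t-1-i) x
      = 2 * ∑ i ∈ Finset.range t, chebT ℝ (i+1) x * chebU ℝ (t-1-i) x := by
        rw [Finset.mul_sum]; apply Finset.sum_congr rfl; intros; ring
    _ = (t:ℝ) * chebU ℝ t x := key
    _ = ((t:ℝ)+1-1) * chebU ℝ t x := by ring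

lemma testA (Δt ω0 ω1 Tk T1 T2 Uk Ukm U1 k : ℝ)
    (hTk : Tk ≠ 0) (hT1 : T1 ≠ 0) (hT2 : T2 ≠ 0)
    (key : (k+2)*U1 = 2*ω0*(k+1)*Uk + 2*T1 - k*Ukm) :
    2*ω0*T1/T2 * (Δt*ω1/T1) * ((k+1)*Uk) + (-(Tk/T2)) * (Δt*ω1/Tk) * (k*Ukm) + 2*ω1*T1/T2*Δt
      = Δt*ω1/T2 * ((k+2)*U1) := by
  have h1 : 2*ω0*T1/T2 * (Δt*ω1/T1) * ((k+1)*Uk) = Δt*ω1/T2 * (2*ω0*(k+1)*Uk) := by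
    field_simp
  have h2 : (-(Tk/T2)) * (Δt*ω1/Tk) * (k*Ukm) = Δt*ω1/T2 * (-(k*Ukm)) := by
    field_simp
  have h3 : 2*ω1*T1/T2*Δt = Δt*ω1/T2 * (2*T1) := by field_simp
  rw [h1, h2, h3, key]
  ring

lemma testB1 (Δt ω0 ω1 Tk T1 T2 c1 c0 : ℝ)
    (hTk : Tk ≠ 0) (hT1 : T1 ≠ 0) (hT2 : T2 ≠ 0) :
    2*ω0*T1/T2 * (Δt*ω1/T1) * c1 + (-(Tk/T2)) * (Δt*ω1/Tk) * c0 + 2*ω1*T1/T2*Δt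
      = Δt*ω1/T2 * (2*ω0*c1 - c0 + 2*T1) := by
  have h1 : 2*ω0*T1/T2 * (Δt*ω1/T1) * c1 = Δt*ω1/T2 * (2*ω0*c1) := by field_simp
  have h2 : (-(Tk/T2)) * (Δt*ω1/Tk) * c0 = Δt*ω1/T2 * (-c0) := by field_simp
  have h3 : 2*ω1*T1/T2*Δt = Δt*ω1/T2 * (2*T1) := by field_simp
  rw [h1, h2, h3]
  ring

lemma testB0 (Δt ω0 ω1 Tk T1 T2 c1 c0 : ℝ)
    (hTk : Tk ≠ 0) (hT1 : T1 ≠ 0) (hT2 : T2 ≠ 0) :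
    2*ω0*T1/T2 * (Δt*ω1/T1) * c1 + (-(Tk/T2)) * (Δt*ω1/Tk) * c0 + 0
      = Δt*ω1/T2 * (2*ω0*c1 - c0 + 0) := by
  have h1 : 2*ω0*T1/T2 * (Δt*ω1/T1) * c1 = Δt*ω1/T2 * (2*ω0*c1) := by field_simp
  have h2 : (-(Tk/T2)) * (Δt*ω1/Tk) * c0 = Δt*ω1/T2 * (-c0) := by field_simp
  rw [h1, h2]
  ring

/-- one step of the mixed-precision RKC1 scheme with perturbations
`Δ̂f_j` bounded by `K` satisfies `‖ŷ⁺ − ŷ − Δt f(ŷ)‖₂ ≤ K Δt`. -/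
theorem mixed_precision_rkc1_consistency
    {n : ℕ} (s : ℕ) (hs : 1 ≤ s) (ϑ : ℝ) (hϑ : 0 ≤ ϑ)
    (ω0 ω1 : ℝ) (b μ ν κ : ℕ → ℝ)
    (hω0 : ω0 = 1 + ϑ / (s : ℝ) ^ 2)
    (hω1 : ω1 = chebT ℝ s ω0 / deriv (fun x => chebT ℝ s x) ω0)
    (hb : ∀ j, j ≤ s → b j = 1 / chebT ℝ j ω0)
    (hμ1 : μ 1 = b 1 * ω1)
    (hμ : ∀ j, 2 ≤ j → j ≤ s → μ j = 2 * ω1 * b j / b (j - 1))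
    (hν : ∀ j, 2 ≤ j → j ≤ s → ν j = 2 * ω0 * b j / b (j - 1))
    (hκ : ∀ j, 2 ≤ j → j ≤ s → κ j = -(b j / b (j - 2)))
    (f : EuclideanSpace ℝ (Fin n) → EuclideanSpace ℝ (Fin n))
    (yhat : EuclideanSpace ℝ (Fin n)) (Δt : ℝ) (hΔt : 0 < Δt)
    (K : ℝ) (hK : 0 ≤ K)
    (Δf : ℕ → EuclideanSpace ℝ (Fin n))
    (hΔf : ∀ j, 1 ≤ j → j ≤ s - 1 → ‖Δf j‖ ≤ K)
    (d : ℕ → EuclideanSpace ℝ (Fin n))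
    (hd0 : d 0 = 0) (hd1 : d 1 = (μ 1 * Δt) • f yhat)
    (hd : ∀ j, 2 ≤ j → j ≤ s →
      d j = ν j • d (j - 1) + κ j • d (j - 2) + (μ j * Δt) • (f yhat + Δf (j - 1)))
    (yhat' : EuclideanSpace ℝ (Fin n)) (hyhat' : yhat' = yhat + d s) :
    ‖yhat' - yhat - Δt • f yhat‖ ≤ K * Δt := by
  have hx : 1 ≤ ω0 := by
    rw [hω0]
    have hss : (0:ℝ) < (s:ℝ)^2 := by positivity
    have : 0 ≤ ϑ / (s:ℝ)^2 := by positivity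
    linarith
  have hTpos : ∀ m, (0:ℝ) < chebT ℝ m ω0 := fun m => lt_of_lt_of_le one_pos (one_le_chebT hx m)
  have hTne : ∀ m, chebT ℝ m ω0 ≠ 0 := fun m => (hTpos m).ne'
  have hUpos : ∀ m, (0:ℝ) < chebU ℝ m ω0 := fun m => lt_of_lt_of_le one_pos (one_le_chebU hx m)
  have hUne : ∀ m, chebU ℝ m ω0 ≠ 0 := fun m => (hUpos m).ne'
  have hspos : (0:ℝ) < (s:ℝ) := by exact_mod_cast Nat.pos_of_ne_zero (by omega)
  have hD : deriv (fun y => chebT ℝ s y) ω0 = (s:ℝ) * chebU ℝ (s-1) ω0 :=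
    (hasDerivAt_chebT ω0 s).deriv
  have hω1' : ω1 = chebT ℝ s ω0 / ((s:ℝ) * chebU ℝ (s-1) ω0) := by rw [hω1, hD]
  have hω1pos : 0 < ω1 := by
    rw [hω1']
    exact div_pos (hTpos s) (mul_pos hspos (hUpos (s-1)))
  -- main inductive claim
  have main : ∀ j, j ≤ s → d j = (Δt * ω1 / chebT ℝ j ω0) •
      (((j:ℝ) * chebU ℝ (j-1) ω0) • f yhat
        + ∑ i ∈ Finset.range s, ccoef ω0 j i • Δf (i+1)) := by
    intro j
    induction j using Nat.strong_induction_on with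
    | _ j IH =>
      intro hj
      obtain _ | j := j
      · have hcc : ∀ i, ccoef ω0 0 i = 0 := fun i => by unfold ccoef; rw [if_neg (by omega)]
        simp [hd0, hcc]
      obtain _ | k := j
      · -- j = 1
        have hcc : ∀ i, ccoef ω0 1 i = 0 := fun i => by unfold ccoef; rw [if_neg (by omega)]
        rw [hd1, hμ1, hb 1 hs]
        simp only [hcc, zero_smul, Finset.sum_const_zero, add_zero, Nat.cast_one,
          Nat.sub_self, smul_smul]
        have hU0 : chebU ℝ 0 ω0 = 1 := rfl
        rw [hU0]
        congr 1
        ring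
      · -- j = k+2
        have hrec := hd (k+2) (by omega) hj
        have e1 : (k+2)-1 = k+1 := by omega
        have e2 : (k+2)-2 = k := by omega
        rw [e1, e2] at hrec
        rw [hrec, IH (k+1) (by omega) (by omega), IH k (by omega) (by omega)]
        simp only [Nat.add_sub_cancel]
        -- coefficient values
        have hνv : ν (k+2) = 2 * ω0 * chebT ℝ (k+1) ω0 / chebT ℝ (k+2) ω0 := by
          rw [hν (k+2) (by omega) hj, e1, hb (k+2) hj, hb (k+1) (by omega)]
          field_simp
        have hκv : κ (k+2) = -(chebT ℝ k ω0 / chebT ℝ (k+2) ω0) := by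
          rw [hκ (k+2) (by omega) hj, e2, hb (k+2) hj, hb k (by omega)]
          field_simp
        have hμv : μ (k+2) = 2 * ω1 * chebT ℝ (k+1) ω0 / chebT ℝ (k+2) ω0 := by
          rw [hμ (k+2) (by omega) hj, e1, hb (k+2) hj, hb (k+1) (by omega)]
          field_simp
        -- scalar identities
        have hA : ν (k+2) * (Δt * ω1 / chebT ℝ (k+1) ω0) * (((k+1:ℕ):ℝ) * chebU ℝ k ω0)
            + κ (k+2) * (Δt * ω1 / chebT ℝ k ω0) * ((k:ℝ) * chebU ℝ (k-1) ω0)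
            + μ (k+2) * Δt
            = Δt * ω1 / chebT ℝ (k+2) ω0 * (((k+2:ℕ):ℝ) * chebU ℝ (k+1) ω0) := by
          rw [hνv, hκv, hμv]
          push_cast
          exact testA Δt ω0 ω1 (chebT ℝ k ω0) (chebT ℝ (k+1) ω0) (chebT ℝ (k+2) ω0)
            (chebU ℝ k ω0) (chebU ℝ (k-1) ω0) (chebU ℝ (k+1) ω0) (k:ℝ)
            (hTne k) (hTne (k+1)) (hTne (k+2)) (key_a ω0 k)
        have hB : ∀ i, ν (k+2) * (Δt * ω1 / chebT ℝ (k+1) ω0) * ccoef ω0 (k+1) i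
            + κ (k+2) * (Δt * ω1 / chebT ℝ k ω0) * ccoef ω0 k i
            + (if i = k then μ (k+2) * Δt else 0)
            = Δt * ω1 / chebT ℝ (k+2) ω0 * ccoef ω0 (k+2) i := by
          intro i
          rw [hνv, hκv, hμv, ccoef_rec]
          by_cases hik : i = k
          · rw [if_pos hik, if_pos hik]
            exact testB1 Δt ω0 ω1 (chebT ℝ k ω0) (chebT ℝ (k+1) ω0) (chebT ℝ (k+2) ω0)
              (ccoef ω0 (k+1) i) (ccoef ω0 k i) (hTne k) (hTne (k+1)) (hTne (k+2))
          · rw [if_neg hik, if_neg hik]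
            exact testB0 Δt ω0 ω1 (chebT ℝ k ω0) (chebT ℝ (k+1) ω0) (chebT ℝ (k+2) ω0)
              (ccoef ω0 (k+1) i) (ccoef ω0 k i) (hTne k) (hTne (k+1)) (hTne (k+2))
        -- vector assembly
        set F := f yhat with hF
        set g : ℕ → EuclideanSpace ℝ (Fin n) := fun i => Δf (i+1) with hg
        have expand : ∀ (p a : ℝ) (w : ℕ → ℝ),
            p • (a • F + ∑ i ∈ Finset.range s, w i • g i)
              = (p*a) • F + ∑ i ∈ Finset.range s, (p * w i) • g i := by
          intro p a w
          rw [smul_add, smul_smul, Finset.smul_sum]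
          congr 1
          exact Finset.sum_congr rfl (fun i _ => (smul_smul p (w i) (g i)))
        rw [smul_smul, smul_smul, expand, expand, expand, smul_add]
        have hk_mem : k ∈ Finset.range s := Finset.mem_range.mpr (by omega)
        have hsum : ∑ i ∈ Finset.range s, (Δt * ω1 / chebT ℝ (k+2) ω0 * ccoef ω0 (k+2) i) • g i
            = (∑ i ∈ Finset.range s,
                ((ν (k+2) * (Δt * ω1 / chebT ℝ (k+1) ω0) * ccoef ω0 (k+1) i) • g i
                  + (κ (k+2) * (Δt * ω1 / chebT ℝ k ω0) * ccoef ω0 k i) • g i))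
              + (μ (k+2) * Δt) • g k := by
          have hite : (μ (k+2) * Δt) • g k
              = ∑ i ∈ Finset.range s, (if i = k then (μ (k+2) * Δt) • g i else 0) := by
            rw [Finset.sum_ite_eq' (Finset.range s) k (fun i => (μ (k+2) * Δt) • g i),
              if_pos hk_mem]
          rw [hite, ← Finset.sum_add_distrib]
          apply Finset.sum_congr rfl
          intro i hi
          calc (Δt * ω1 / chebT ℝ (k+2) ω0 * ccoef ω0 (k+2) i) • g i
              = (ν (k+2) * (Δt * ω1 / chebT ℝ (k+1) ω0) * ccoef ω0 (k+1) i
                  + κ (k+2) * (Δt * ω1 / chebT ℝ k ω0) * ccoef ω0 k i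
                  + (if i = k then μ (k+2) * Δt else 0)) • g i := by rw [hB i]
            _ = _ := by rw [add_smul, add_smul, ite_smul, zero_smul]
        rw [← hA, hsum, add_smul, add_smul, Finset.sum_add_distrib]
        abel

    -- conclusion
  have hds := main s le_rfl
  set q : ℝ := Δt * ω1 / chebT ℝ s ω0 with hq
  have hqnn : 0 ≤ q := by
    rw [hq]
    exact div_nonneg (mul_nonneg hΔt.le hω1pos.le) (hTpos s).le
  have hqa : q * ((s:ℝ) * chebU ℝ (s-1) ω0) = Δt := by
    rw [hq, hω1']
    field_simp [hTne s, hUne (s-1), hspos.ne']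
  have hdiff : yhat' - yhat - Δt • f yhat
      = q • ∑ i ∈ Finset.range s, ccoef ω0 s i • Δf (i+1) := by
    rw [hyhat', hds, smul_add, smul_smul, hqa]
    abel
  rw [hdiff, norm_smul, Real.norm_eq_abs, abs_of_nonneg hqnn]
  have hbound : ‖∑ i ∈ Finset.range s, ccoef ω0 s i • Δf (i+1)‖
      ≤ ∑ i ∈ Finset.range s, ccoef ω0 s i * K := by
    refine (norm_sum_le _ _).trans (Finset.sum_le_sum ?_)
    intro i hi
    rw [norm_smul, Real.norm_eq_abs, abs_of_nonneg (ccoef_nonneg hx s i)]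
    by_cases hcase : i + 2 ≤ s
    · exact mul_le_mul_of_nonneg_left (hΔf (i+1) (by omega) (by omega))
        (ccoef_nonneg hx s i)
    · have hz : ccoef ω0 s i = 0 := by unfold ccoef; rw [if_neg hcase]
      simp [hz]
  have hsumval : ∑ i ∈ Finset.range s, ccoef ω0 s i * K
      = ((s:ℝ)-1) * chebU ℝ (s-1) ω0 * K := by
    rw [← Finset.sum_mul, sum_ccoef s hs]
  have htotal : q * (((s:ℝ)-1) * chebU ℝ (s-1) ω0 * K) = K * Δt * (((s:ℝ)-1)/(s:ℝ)) := by
    rw [hq, hω1']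
    field_simp [hTne s, hUne (s-1), hspos.ne']
  calc q * ‖∑ i ∈ Finset.range s, ccoef ω0 s i • Δf (i+1)‖
      ≤ q * (∑ i ∈ Finset.range s, ccoef ω0 s i * K) :=
        mul_le_mul_of_nonneg_left hbound hqnn
    _ = K * Δt * (((s:ℝ)-1)/(s:ℝ)) := by rw [hsumval, htotal]
    _ ≤ K * Δt * 1 := by
        apply mul_le_mul_of_nonneg_left _ (by positivity)
        rw [div_le_one hspos]
        linarith
    _ = K * Δt := by ring
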